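/- Let y be a word of length n ≥ 1 over a finite alphabet Σ such that every letter of Σ occurs in y. Then y has a minimal absent word of length n+1 if and only if y is the concatenation of n copies of a single letter. -/

import Mathlib

/-- The set of minimal absent words of a word `y`: words that are not factors of `y`
all of whose proper factors are factors of `y`. -/
def MAWWord {α : Type*} (y : List α) : Set (List α) :=
  {w | ¬ w <:+: y ∧ ∀ v, v <:+: w → v ≠ w → v <:+: y}

/-- If `y` is a word of length `n ≥ 1` over a finite alphabet in which
every letter of the alphabet occurs, then `y` has a minimal absent word of length
`n + 1` if and only if `y` is the concatenation of `n` copies of a single letter. -/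
theorem maw_of_length_succ_iff_power_of_letter {α : Type*} [Fintype α]
    (y : List α) (hy : y ≠ []) (hall : ∀ a : α, a ∈ y) :
    (∃ w ∈ MAWWord y, w.length = y.length + 1) ↔
      ∃ a : α, y = List.replicate y.length a := by
  constructor
  · rintro ⟨w, ⟨hninf, hmin⟩, hlen⟩
    set n := y.length with hn
    have hwpos : 0 < w.length := by omega
    have htake : w.take n = y := by
      have h1 : w.take n <:+: y := by
        apply hmin
        · exact (List.take_prefix n w).isInfix
        · intro h
          have := congrArg List.length h
          simp [hlen] at this
      exact h1.sublist.eq_of_length (by simp [hlen, hn])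
    have hdrop : w.drop 1 = y := by
      have h1 : w.drop 1 <:+: y := by
        apply hmin
        · exact (List.drop_suffix 1 w).isInfix
        · intro h
          have := congrArg List.length h
          simp [hlen] at this
      exact h1.sublist.eq_of_length (by simp [hlen, hn])
    have hconst : ∀ i (hi : i < w.length), w.get ⟨i, hi⟩ = w.get ⟨0, hwpos⟩ := by
      intro i
      induction i with
      | zero => intro hi; rfl
      | succ k ih =>
        intro hi
        have hk : k < n := by omega
        have e1 : w.get ⟨k + 1, hi⟩ = (w.drop 1).get ⟨k, by simp [hlen]; omega⟩ := by
          simp [List.getElem_drop, Nat.add_comm]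
        have e2 : (w.take n).get ⟨k, by simp [hlen]; omega⟩ = w.get ⟨k, by omega⟩ := by
          simp [List.getElem_take]
        have e3 := List.get_of_eq hdrop ⟨k, by simp [hlen]; omega⟩
        have e4 := List.get_of_eq htake ⟨k, by simp [hlen]; omega⟩
        rw [e1, e3, ← e4, e2, ih]
    refine ⟨w.get ⟨0, hwpos⟩, ?_⟩
    apply List.eq_replicate_of_mem
    intro b hb
    have hb' : b ∈ w := by
      rw [← hdrop] at hb
      exact (List.drop_subset 1 w) hb
    obtain ⟨i, hi⟩ := List.mem_iff_get.mp hb'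
    rw [← hi]
    exact hconst i.1 i.2
  · rintro ⟨a, hy2⟩
    set n := y.length with hn
    refine ⟨List.replicate (n + 1) a, ⟨?_, ?_⟩, by simp⟩
    · intro h
      have := h.sublist.length_le
      simp [hn] at this
    · intro v hv hne
      have hmem : ∀ b ∈ v, b = a := by
        intro b hb
        have := hv.sublist.subset hb
        exact (List.eq_of_mem_replicate this)
      have hv' : v = List.replicate v.length a := List.eq_replicate_of_mem hmem
      have hle : v.length ≤ n + 1 := by
        have := hv.sublist.length_le
        simpa using this
      have hlt : v.length ≠ n + 1 := by
        intro h
        apply hne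
        rw [hv', h]
      have : v.length ≤ n := by omega
      rw [hy2, hv']
      have hp : List.replicate v.length a <+: List.replicate n a :=
        ⟨List.replicate (n - v.length) a, by rw [← List.replicate_add]; congr 1; omega⟩
      exact hp.isInfix
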